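/- Let S be a monoid with zero, λ a nonempty set, and H₁ the group of units of S. The map 𝔉 sending a triple [φ, h, u] ∈ 𝒮_λ × Aut(S) × H₁^λ to the automorphism σ_{[φ,h,u]} of B⁰_λ(S) given by (α, s, β) ↦ (φ(α), u(α)·h(s)·(u(β))⁻¹, φ(β)), 0 ↦ 0, is a surjective group homomorphism from the group (𝒮_λ × Aut(S) × H₁^λ, ·), with operation [φ, h, u]·[φ', h', u'] = [φφ', hh', α ↦ u'(φ(α))·h'(u(α))], onto the automorphism group Aut(B⁰_λ(S)). -/

import Mathlib

/-- The Brandt λ⁰-extension `B⁰_Λ(S)` of a semigroup `S` with zero: its underlying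
set is `(Λ × (S \ {0_S}) × Λ) ∪ {0}`, where `none` plays the role of the zero `0`. -/
def Brandt (Λ S : Type*) [Zero S] : Type _ :=
  Option (Λ × {s : S // s ≠ 0} × Λ)

namespace Brandt

variable {Λ S : Type*}

instance [Zero S] : Zero (Brandt Λ S) := ⟨none⟩

open Classical in
/-- `(α, a, β)·(γ, b, δ) = (α, ab, δ)` if `β = γ` and `ab ≠ 0_S`, and `0` otherwise;
`0` is a two-sided zero. -/
noncomputable instance [Zero S] [Mul S] : Mul (Brandt Λ S) :=
  ⟨fun x y =>
    match x, y with
    | some (α, a, β), some (γ, b, δ) =>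
        if h : β = γ ∧ a.1 * b.1 ≠ 0 then some (α, ⟨a.1 * b.1, h.2⟩, δ) else 0
    | _, _ => 0⟩

open Classical in
/-- `Brandt.mk α s β` is the element `(α, s, β)` of `B⁰_Λ(S)` if `s ≠ 0`, and `0` otherwise. -/
noncomputable def mk [Zero S] (α : Λ) (s : S) (β : Λ) : Brandt Λ S :=
  if h : s ≠ 0 then some (α, ⟨s, h⟩, β) else 0

end Brandt

/-- An automorphism of a semigroup: a bijective map preserving the multiplication. -/
def IsSemigroupAut {T : Type*} [Mul T] (σ : T → T) : Prop :=
  Function.Bijective σ ∧ ∀ x y : T, σ (x * y) = σ x * σ y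


section Aux
variable {Λ S : Type*}
namespace Brandt

theorem zero_mul'' [Zero S] [Mul S] (x : Brandt Λ S) : (0 : Brandt Λ S) * x = 0 := by
  rcases x with _ | ⟨α, a, β⟩ <;> rfl

theorem mul_zero'' [Zero S] [Mul S] (x : Brandt Λ S) : x * (0 : Brandt Λ S) = 0 := by
  rcases x with _ | ⟨α, a, β⟩ <;> rfl

theorem mul_none'' [Zero S] [Mul S] (x : Brandt Λ S) :
    x * (show Brandt Λ S from none) = 0 := by
  rcases x with _ | ⟨α, a, β⟩ <;> rfl

theorem none_mul'' [Zero S] [Mul S] (x : Brandt Λ S) :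
    (show Brandt Λ S from none) * x = 0 := by
  rcases x with _ | ⟨α, a, β⟩ <;> rfl

open Classical in
theorem some_mul_some [Zero S] [Mul S] (α β γ δ : Λ) (a b : {s : S // s ≠ 0}) :
    @HMul.hMul (Brandt Λ S) (Brandt Λ S) (Brandt Λ S) instHMul
        (some (α, a, β)) (some (γ, b, δ)) =
      if h : β = γ ∧ a.1 * b.1 ≠ 0 then (some (α, ⟨a.1 * b.1, h.2⟩, δ) : Brandt Λ S)
      else (0 : Brandt Λ S) := rfl

theorem mk_eq_some [Zero S] {s : S} (hs : s ≠ 0) (α β : Λ) :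
    mk α s β = some (α, ⟨s, hs⟩, β) := dif_pos hs

theorem mk_zero [Zero S] (α β : Λ) : mk α (0 : S) β = (0 : Brandt Λ S) :=
  dif_neg (by simp)

theorem mk_eq_zero_iff [Zero S] {s : S} {α β : Λ} : mk α s β = 0 ↔ s = 0 := by
  constructor
  · intro h
    by_contra hs
    rw [mk_eq_some hs] at h
    exact Option.some_ne_none _ h
  · rintro rfl; exact mk_zero α β

theorem mk_ne_zero [Zero S] {s : S} (hs : s ≠ 0) (α β : Λ) : mk α s β ≠ 0 := by
  simp [mk_eq_zero_iff, hs]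

theorem mk_inj [Zero S] {α β γ δ : Λ} {s t : S} (ht : t ≠ 0)
    (h : mk α s β = mk γ t δ) : α = γ ∧ s = t ∧ β = δ := by
  rw [mk_eq_some ht] at h
  by_cases hs : s = 0
  · rw [hs, mk_zero] at h
    exact (Option.some_ne_none _ h.symm).elim
  · rw [mk_eq_some hs] at h
    have h' : (α, (⟨s, hs⟩ : {s : S // s ≠ 0}), β) = (γ, ⟨t, ht⟩, δ) :=
      Option.some_injective _ h
    simp only [Prod.mk.injEq, Subtype.mk.injEq] at h'
    exact ⟨h'.1, h'.2.1, h'.2.2⟩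

theorem mk_mul_mk [MonoidWithZero S] (α β γ : Λ) (a b : S) :
    (mk α a β * mk β b γ : Brandt Λ S) = mk α (a * b) γ := by
  by_cases ha : a = 0
  · rw [ha, mk_zero, zero_mul'', zero_mul, mk_zero]
  by_cases hb : b = 0
  · rw [hb, mk_zero, mul_zero'', mul_zero, mk_zero]
  rw [mk_eq_some ha, mk_eq_some hb, some_mul_some]
  by_cases hab : a * b = 0
  · rw [mk_eq_zero_iff.mpr hab]; exact dif_neg (by simp [hab])
  · rw [mk_eq_some hab]; exact dif_pos ⟨rfl, hab⟩

theorem mk_mul_mk_of_ne [MonoidWithZero S] {β γ : Λ} (hbg : β ≠ γ) (α δ : Λ) (a b : S) :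
    (mk α a β * mk γ b δ : Brandt Λ S) = 0 := by
  by_cases ha : a = 0
  · rw [ha, mk_zero, zero_mul'']
  by_cases hb : b = 0
  · rw [hb, mk_zero, mul_zero'']
  rw [mk_eq_some ha, mk_eq_some hb, some_mul_some]; exact dif_neg (by simp [hbg])

end Brandt
end Aux
/-- `brandtAut φ h u` is the automorphism `σ_{[φ,h,u]}` of `B⁰_Λ(S)` given by
`(α, s, β) ↦ (φ(α), u(α)·h(s)·(u(β))⁻¹, φ(β))` and `0 ↦ 0`. -/
noncomputable def brandtAut {Λ S : Type*} [MonoidWithZero S]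
    (φ : Λ ≃ Λ) (h : S ≃* S) (u : Λ → Sˣ) :
    Brandt Λ S → Brandt Λ S
  | some (α, s, β) => Brandt.mk (φ α) ((u α : S) * h s.1 * ((u β)⁻¹ : Sˣ)) (φ β)
  | none => 0

/-- Multiplication on `𝒮_Λ × Aut(S) × H₁^Λ`:
`[φ, h, u]·[φ', h', u'] = [φφ', hh', α ↦ u'(φ(α))·h'(u(α))]`, where `φφ'` is
`α ↦ φ'(φ(α))` and `hh'` is `s ↦ h'(h(s))` (left-to-right composition). -/
def tripleMul {Λ S : Type*} [Monoid S]
    (p q : (Λ ≃ Λ) × (S ≃* S) × (Λ → Sˣ)) : (Λ ≃ Λ) × (S ≃* S) × (Λ → Sˣ) :=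
  ⟨p.1.trans q.1, p.2.1.trans q.2.1,
    fun α => q.2.2 (p.1 α) * Units.map q.2.1.toMonoidHom (p.2.2 α)⟩

section Parts12
variable {Λ S : Type*} [MonoidWithZero S]
open Brandt

theorem brandtAut_zero (φ : Λ ≃ Λ) (h : S ≃* S) (u : Λ → Sˣ) :
    brandtAut φ h u 0 = 0 := rfl

theorem brandtAut_mk (φ : Λ ≃ Λ) (h : S ≃* S) (u : Λ → Sˣ) (α β : Λ) (s : S) :
    brandtAut φ h u (Brandt.mk α s β) =
      Brandt.mk (φ α) ((u α : S) * h s * (((u β)⁻¹ : Sˣ) : S)) (φ β) := by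
  by_cases hs : s = 0
  · rw [hs, mk_zero, map_zero, mul_zero, zero_mul, mk_zero]; rfl
  · rw [mk_eq_some hs]; rfl

theorem some_eq_mk (α β : Λ) (a : {s : S // s ≠ 0}) :
    (some (α, a, β) : Brandt Λ S) = Brandt.mk α a.1 β := (mk_eq_some a.2 α β).symm

theorem brandtAut_mul (φ : Λ ≃ Λ) (h : S ≃* S) (u : Λ → Sˣ) (x y : Brandt Λ S) :
    brandtAut φ h u (x * y) = brandtAut φ h u x * brandtAut φ h u y := by
  rcases x with _ | ⟨α, a, β⟩
  · rfl
  rcases y with _ | ⟨γ, b, δ⟩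
  · exact (congrArg (brandtAut φ h u) (mul_zero'' (some (α, a, β) : Brandt Λ S))).trans
      (mul_zero'' _).symm
  rw [some_eq_mk α β a, some_eq_mk γ δ b]
  by_cases hβγ : β = γ
  · subst hβγ
    rw [mk_mul_mk, brandtAut_mk, brandtAut_mk, brandtAut_mk, mk_mul_mk]
    congr 1
    simp [map_mul, mul_assoc, Units.inv_mul_cancel_left]
  · rw [mk_mul_mk_of_ne hβγ, brandtAut_zero, brandtAut_mk, brandtAut_mk,
      mk_mul_mk_of_ne (fun c => hβγ (φ.injective c))]

theorem brandtAut_tripleMul (p q : (Λ ≃ Λ) × (S ≃* S) × (Λ → Sˣ)) :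
    brandtAut (tripleMul p q).1 (tripleMul p q).2.1 (tripleMul p q).2.2 =
      brandtAut q.1 q.2.1 q.2.2 ∘ brandtAut p.1 p.2.1 p.2.2 := by
  obtain ⟨φ, h, u⟩ := p; obtain ⟨φ', h', u'⟩ := q
  funext x
  rcases x with _ | ⟨α, s, β⟩
  · rfl
  · show brandtAut _ _ _ (some (α, s, β)) =
      brandtAut φ' h' u' (brandtAut φ h u (some (α, s, β)))
    rw [show brandtAut φ h u (some (α, s, β)) =
        Brandt.mk (φ α) ((u α : S) * h s.1 * (((u β)⁻¹ : Sˣ) : S)) (φ β) from rfl,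
      brandtAut_mk,
      show brandtAut (tripleMul (φ, h, u) (φ', h', u')).1 (tripleMul (φ, h, u) (φ', h', u')).2.1
          (tripleMul (φ, h, u) (φ', h', u')).2.2 (some (α, s, β)) =
        Brandt.mk (φ' (φ α))
          (((tripleMul (φ, h, u) (φ', h', u')).2.2 α : S) * h' (h s.1) *
            (((tripleMul (φ, h, u) (φ', h', u')).2.2 β)⁻¹ : Sˣ)) (φ' (φ β)) from rfl]
    congr 1
    simp [tripleMul, map_mul, mul_assoc, mul_inv_rev]

theorem brandtAut_one :
    brandtAut (Equiv.refl Λ) (MulEquiv.refl S) (fun _ => (1 : Sˣ)) = (id : Brandt Λ S → Brandt Λ S) := by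
  funext x
  rcases x with _ | ⟨α, s, β⟩
  · rfl
  · show Brandt.mk α (((1 : Sˣ) : S) * (MulEquiv.refl S) s.1 * (((1 : Sˣ)⁻¹ : Sˣ) : S)) β
      = some (α, s, β)
    simp [mk_eq_some s.2]
    rfl

end Parts12
section Bij
variable {Λ S : Type*} [MonoidWithZero S]

noncomputable def pinv (p : (Λ ≃ Λ) × (S ≃* S) × (Λ → Sˣ)) :
    (Λ ≃ Λ) × (S ≃* S) × (Λ → Sˣ) :=
  ⟨p.1.symm, p.2.1.symm, fun α => (Units.map p.2.1.symm.toMonoidHom (p.2.2 (p.1.symm α)))⁻¹⟩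

theorem tripleMul_pinv (p : (Λ ≃ Λ) × (S ≃* S) × (Λ → Sˣ)) :
    tripleMul p (pinv p) = ⟨Equiv.refl Λ, MulEquiv.refl S, fun _ => 1⟩ := by
  obtain ⟨φ, h, u⟩ := p
  refine Prod.ext ?_ (Prod.ext ?_ ?_)
  · exact φ.self_trans_symm
  · exact h.self_trans_symm
  · funext α
    show (Units.map h.symm.toMonoidHom (u (φ.symm (φ α))))⁻¹ *
      Units.map h.symm.toMonoidHom (u α) = 1
    rw [Equiv.symm_apply_apply, inv_mul_cancel]

theorem pinv_tripleMul (p : (Λ ≃ Λ) × (S ≃* S) × (Λ → Sˣ)) :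
    tripleMul (pinv p) p = ⟨Equiv.refl Λ, MulEquiv.refl S, fun _ => 1⟩ := by
  obtain ⟨φ, h, u⟩ := p
  refine Prod.ext ?_ (Prod.ext ?_ ?_)
  · exact φ.symm_trans_self
  · exact h.symm_trans_self
  · funext α
    show u (φ.symm α) *
      Units.map h.toMonoidHom ((Units.map h.symm.toMonoidHom (u (φ.symm α)))⁻¹) = 1
    rw [map_inv]
    have : Units.map h.toMonoidHom (Units.map h.symm.toMonoidHom (u (φ.symm α))) =
        u (φ.symm α) := Units.ext (h.apply_symm_apply _)
    rw [this, mul_inv_cancel]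

theorem brandtAut_bijective (p : (Λ ≃ Λ) × (S ≃* S) × (Λ → Sˣ)) :
    Function.Bijective (brandtAut p.1 p.2.1 p.2.2) := by
  have h1 := brandtAut_tripleMul p (pinv p)
  rw [tripleMul_pinv, brandtAut_one] at h1
  have h2 := brandtAut_tripleMul (pinv p) p
  rw [pinv_tripleMul, brandtAut_one] at h2
  exact Function.bijective_iff_has_inverse.mpr
    ⟨brandtAut (pinv p).1 (pinv p).2.1 (pinv p).2.2,
      fun x => (congrFun h1 x).symm, fun x => (congrFun h2 x).symm⟩

end Bij
section Surj
variable {Λ S : Type*} [Nonempty Λ] [MonoidWithZero S]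
open Brandt

noncomputable def cc1 : Brandt Λ S → Λ
  | some (p, _, _) => p
  | none => Classical.arbitrary Λ

noncomputable def cc2 : Brandt Λ S → Λ
  | some (_, _, q) => q
  | none => Classical.arbitrary Λ

noncomputable def md : Brandt Λ S → S
  | some (_, t, _) => t.1
  | none => 0

theorem recon (x : Brandt Λ S) (hx : x ≠ 0) :
    x = Brandt.mk (cc1 x) (md x) (cc2 x) ∧ md x ≠ 0 := by
  rcases x with _ | ⟨p, t, q⟩
  · exact absurd rfl hx
  · exact ⟨(mk_eq_some t.2 p q).symm, t.2⟩

theorem brandt_surj (σ : Brandt Λ S → Brandt Λ S) (hb : Function.Bijective σ)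
    (hm : ∀ x y, σ (x * y) = σ x * σ y) :
    ∃ p : (Λ ≃ Λ) × (S ≃* S) × (Λ → Sˣ), brandtAut p.1 p.2.1 p.2.2 = σ := by
  have hz : ∀ τ : Brandt Λ S → Brandt Λ S, Function.Surjective τ →
      (∀ x y, τ (x * y) = τ x * τ y) → τ 0 = 0 := by
    intro τ hsurj hmul
    have h1 : ∀ y, τ 0 * y = τ 0 := fun y => by
      obtain ⟨x, rfl⟩ := hsurj y
      rw [← hmul, zero_mul'']
    have h2 := h1 0
    rw [mul_zero''] at h2
    exact h2.symm
  have hσ0 : σ 0 = 0 := hz σ hb.2 hm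
  obtain ⟨ρ, hρσ, hσρ⟩ := Function.bijective_iff_has_inverse.mp hb
  have hρb : Function.Bijective ρ := Function.bijective_iff_has_inverse.mpr ⟨σ, hσρ, hρσ⟩
  have hρm : ∀ x y, ρ (x * y) = ρ x * ρ y := by
    intro x y
    obtain ⟨a, rfl⟩ := hb.2 x
    obtain ⟨b, rfl⟩ := hb.2 y
    rw [← hm, hρσ, hρσ, hρσ]
  have hρ0 : ρ 0 = 0 := hz ρ hρb.2 hρm
  by_cases h10 : (1 : S) = 0
  · have hall : ∀ x : Brandt Λ S, x = 0 := by
      rintro (_ | ⟨α, s, β⟩)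
      · rfl
      · exact absurd (by rw [← mul_one s.1, h10, mul_zero] : s.1 = 0) s.2
    exact ⟨⟨Equiv.refl Λ, MulEquiv.refl S, fun _ => 1⟩, funext fun x => by
      rw [hall x]; exact (brandtAut_zero _ _ _).trans hσ0.symm⟩
  have h10' : (1 : S) ≠ 0 := h10
  -- key positional lemma
  have key : ∀ τ : Brandt Λ S → Brandt Λ S, Function.Injective τ →
      (∀ x y, τ (x * y) = τ x * τ y) → τ 0 = 0 →
      ∀ (α β : Λ) (s : S), s ≠ 0 →
        τ (Brandt.mk α s β) =
          Brandt.mk (cc1 (τ (Brandt.mk α (1:S) α))) (md (τ (Brandt.mk α s β)))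
            (cc1 (τ (Brandt.mk β (1:S) β))) ∧
        md (τ (Brandt.mk α s β)) ≠ 0 := by
    intro τ hinj hmul h0 α β s hs
    have hnz : ∀ x : Brandt Λ S, x ≠ 0 → τ x ≠ 0 := fun x hx c => hx (hinj (c.trans h0.symm))
    have hEfact : ∀ γ : Λ, τ (Brandt.mk γ (1:S) γ) =
        Brandt.mk (cc1 (τ (Brandt.mk γ (1:S) γ))) (md (τ (Brandt.mk γ (1:S) γ)))
          (cc1 (τ (Brandt.mk γ (1:S) γ))) ∧ md (τ (Brandt.mk γ (1:S) γ)) ≠ 0 := by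
      intro γ
      have hEnz : τ (Brandt.mk γ (1:S) γ) ≠ 0 := hnz _ (mk_ne_zero h10' _ _)
      obtain ⟨hE, hEmd⟩ := recon _ hEnz
      refine ⟨?_, hEmd⟩
      have hid : Brandt.mk γ (1:S) γ * Brandt.mk γ (1:S) γ = Brandt.mk γ (1:S) γ := by
        rw [mk_mul_mk, one_mul]
      have hEE := hmul (Brandt.mk γ (1:S) γ) (Brandt.mk γ (1:S) γ)
      rw [hid] at hEE
      have hc2 : cc2 (τ (Brandt.mk γ (1:S) γ)) = cc1 (τ (Brandt.mk γ (1:S) γ)) := by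
        by_contra hne
        rw [hE, mk_mul_mk_of_ne hne] at hEE
        exact mk_ne_zero hEmd _ _ hEE
      rw [hc2] at hE
      exact hE
    have hTnz : τ (Brandt.mk α s β) ≠ 0 := hnz _ (mk_ne_zero hs _ _)
    obtain ⟨hT, hTmd⟩ := recon _ hTnz
    refine ⟨?_, hTmd⟩
    have hL : Brandt.mk α (1:S) α * Brandt.mk α s β = Brandt.mk α s β := by
      rw [mk_mul_mk, one_mul]
    have hLτ := hmul (Brandt.mk α (1:S) α) (Brandt.mk α s β)
    rw [hL] at hLτ
    have h1' : cc1 (τ (Brandt.mk α s β)) = cc1 (τ (Brandt.mk α (1:S) α)) := by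
      by_contra hne
      rw [(hEfact α).1, hT, mk_mul_mk_of_ne (fun c => hne c.symm)] at hLτ
      exact mk_ne_zero hTmd _ _ hLτ
    have hR : Brandt.mk α s β * Brandt.mk β (1:S) β = Brandt.mk α s β := by
      rw [mk_mul_mk, mul_one]
    have hRτ := hmul (Brandt.mk α s β) (Brandt.mk β (1:S) β)
    rw [hR] at hRτ
    have h2' : cc2 (τ (Brandt.mk α s β)) = cc1 (τ (Brandt.mk β (1:S) β)) := by
      by_contra hne
      rw [(hEfact β).1, hT, mk_mul_mk_of_ne hne] at hRτ
      exact mk_ne_zero hTmd _ _ hRτ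
    conv_lhs => rw [hT]
    rw [h1', h2']
  have hσkey := key σ hb.1 hm hσ0
  have hρkey := key ρ hρb.1 hρm hρ0
  obtain ⟨φf, hφfd⟩ : ∃ f : Λ → Λ, f = fun α => cc1 (σ (Brandt.mk α (1:S) α)) := ⟨_, rfl⟩
  obtain ⟨ψf, hψfd⟩ : ∃ f : Λ → Λ, f = fun α => cc1 (ρ (Brandt.mk α (1:S) α)) := ⟨_, rfl⟩
  have hφf : ∀ α, cc1 (σ (Brandt.mk α (1:S) α)) = φf α := fun α => by rw [hφfd]
  have hψf : ∀ α, cc1 (ρ (Brandt.mk α (1:S) α)) = ψf α := fun α => by rw [hψfd]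
  simp only [hφf] at hσkey
  simp only [hψf] at hρkey
  have hψφ : ∀ α, ψf (φf α) = α := by
    intro α
    obtain ⟨h1, he⟩ := hσkey α α 1 h10'
    have h3 : ρ (σ (Brandt.mk α (1:S) α)) = Brandt.mk α (1:S) α := hρσ _
    rw [h1] at h3
    rw [(hρkey (φf α) (φf α) (md (σ (Brandt.mk α (1:S) α))) he).1] at h3
    exact (mk_inj h10' h3).1
  have hφψ : ∀ α, φf (ψf α) = α := by
    intro α
    obtain ⟨h1, he⟩ := hρkey α α 1 h10'
    have h3 : σ (ρ (Brandt.mk α (1:S) α)) = Brandt.mk α (1:S) α := hσρ _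
    rw [h1] at h3
    rw [(hσkey (ψf α) (ψf α) (md (ρ (Brandt.mk α (1:S) α))) he).1] at h3
    exact (mk_inj h10' h3).1
  obtain ⟨α₀⟩ := ‹Nonempty Λ›
  -- identity middle entries
  have hE1 : ∀ α, σ (Brandt.mk α (1:S) α) = Brandt.mk (φf α) (1:S) (φf α) := by
    intro α
    obtain ⟨h1, he⟩ := hσkey α α 1 h10'
    have h2 : σ (ρ (Brandt.mk (φf α) (1:S) (φf α))) = Brandt.mk (φf α) (1:S) (φf α) := hσρ _
    obtain ⟨h3, h3m⟩ := hρkey (φf α) (φf α) 1 h10'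
    rw [hψφ] at h3
    have h4 : Brandt.mk α (1:S) α * ρ (Brandt.mk (φf α) (1:S) (φf α)) =
        ρ (Brandt.mk (φf α) (1:S) (φf α)) := by
      rw [h3, mk_mul_mk, one_mul]
    have h5 := hm (Brandt.mk α (1:S) α) (ρ (Brandt.mk (φf α) (1:S) (φf α)))
    rw [h4, h2, h1, mk_mul_mk] at h5
    have h6 := (mk_inj (by rw [mul_one]; exact he) h5).2.1
    rw [mul_one] at h6
    conv_lhs => rw [h1]
    rw [← h6]
  have hv : ∀ α, σ (Brandt.mk α (1:S) α₀) =
      Brandt.mk (φf α) (md (σ (Brandt.mk α (1:S) α₀))) (φf α₀) :=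
    fun α => (hσkey α α₀ 1 h10').1
  have hw : ∀ α, σ (Brandt.mk α₀ (1:S) α) =
      Brandt.mk (φf α₀) (md (σ (Brandt.mk α₀ (1:S) α))) (φf α) :=
    fun α => (hσkey α₀ α 1 h10').1
  have hvw : ∀ α, md (σ (Brandt.mk α (1:S) α₀)) * md (σ (Brandt.mk α₀ (1:S) α)) = 1 := by
    intro α
    have h4 : Brandt.mk α (1:S) α₀ * Brandt.mk α₀ (1:S) α = Brandt.mk α (1:S) α := by
      rw [mk_mul_mk, one_mul]
    have h5 := hm (Brandt.mk α (1:S) α₀) (Brandt.mk α₀ (1:S) α)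
    rw [h4, hE1, hv, hw, mk_mul_mk] at h5
    exact (mk_inj h10' h5.symm).2.1
  have hwv : ∀ α, md (σ (Brandt.mk α₀ (1:S) α)) * md (σ (Brandt.mk α (1:S) α₀)) = 1 := by
    intro α
    have h4 : Brandt.mk α₀ (1:S) α * Brandt.mk α (1:S) α₀ = Brandt.mk α₀ (1:S) α₀ := by
      rw [mk_mul_mk, one_mul]
    have h5 := hm (Brandt.mk α₀ (1:S) α) (Brandt.mk α (1:S) α₀)
    rw [h4, hE1, hv, hw, mk_mul_mk] at h5
    exact (mk_inj h10' h5.symm).2.1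
  obtain ⟨g, hgd⟩ : ∃ g : S → S, g = fun s => md (σ (Brandt.mk α₀ s α₀)) := ⟨_, rfl⟩
  have hgmk : ∀ s : S, s ≠ 0 →
      σ (Brandt.mk α₀ s α₀) = Brandt.mk (φf α₀) (g s) (φf α₀) ∧ g s ≠ 0 := by
    intro s hs
    simp only [hgd]
    exact hσkey α₀ α₀ s hs
  have hg0 : g 0 = 0 := by
    simp only [hgd]
    rw [mk_zero, hσ0]
    rfl
  have hgmul : ∀ s t, g (s * t) = g s * g t := by
    intro s t
    by_cases hs : s = 0
    · rw [hs, zero_mul, hg0, zero_mul]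
    by_cases ht : t = 0
    · rw [ht, mul_zero, hg0, mul_zero]
    have h5 := hm (Brandt.mk α₀ s α₀) (Brandt.mk α₀ t α₀)
    rw [mk_mul_mk, (hgmk s hs).1, (hgmk t ht).1, mk_mul_mk] at h5
    by_cases hst : s * t = 0
    · rw [hst, mk_zero, hσ0] at h5
      rw [hst, hg0]
      exact (mk_eq_zero_iff.mp h5.symm).symm
    · rw [(hgmk _ hst).1] at h5
      have hne : g s * g t ≠ 0 := by
        intro c
        rw [c, mk_zero] at h5
        exact (hgmk _ hst).2 (mk_eq_zero_iff.mp h5)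
      exact (mk_inj hne h5).2.1
  have hgbij : Function.Bijective g := by
    constructor
    · intro s t hst
      by_cases hs : s = 0
      · by_cases ht : t = 0
        · rw [hs, ht]
        · exfalso; exact (hgmk t ht).2 (by rw [← hst, hs, hg0])
      · by_cases ht : t = 0
        · exfalso; exact (hgmk s hs).2 (by rw [hst, ht, hg0])
        · have h5 : σ (Brandt.mk α₀ s α₀) = σ (Brandt.mk α₀ t α₀) := by
            rw [(hgmk s hs).1, (hgmk t ht).1, hst]
          exact (mk_inj ht (hb.1 h5)).2.1
    · intro t
      by_cases ht : t = 0
      · exact ⟨0, ht ▸ hg0⟩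
      · obtain ⟨h6, h6m⟩ := hρkey (φf α₀) (φf α₀) t ht
        rw [hψφ] at h6
        refine ⟨md (ρ (Brandt.mk (φf α₀) t (φf α₀))), ?_⟩
        have h7 : σ (ρ (Brandt.mk (φf α₀) t (φf α₀))) = Brandt.mk (φf α₀) t (φf α₀) := hσρ _
        rw [h6] at h7
        exact (mk_inj ht ((hgmk _ h6m).1.symm.trans h7)).2.1
  refine ⟨⟨⟨φf, ψf, hψφ, hφψ⟩,
    { Equiv.ofBijective g hgbij with map_mul' := hgmul },
    fun α => ⟨md (σ (Brandt.mk α (1:S) α₀)), md (σ (Brandt.mk α₀ (1:S) α)), hvw α, hwv α⟩⟩,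
    funext fun x => ?_⟩
  rcases x with _ | ⟨α, s, β⟩
  · exact hσ0.symm
  · rw [some_eq_mk α β s, brandtAut_mk]
    have hd : Brandt.mk α s.1 β =
        Brandt.mk α (1:S) α₀ * Brandt.mk α₀ s.1 α₀ * Brandt.mk α₀ (1:S) β := by
      rw [mk_mul_mk, mk_mul_mk, one_mul, mul_one]
    rw [hd, hm, hm, hv, (hgmk s.1 s.2).1, hw, mk_mul_mk, mk_mul_mk]
    rfl

end Surj
/-- The map `𝔉` sending the triple `[φ, h, u] ∈ 𝒮_Λ × Aut(S) × H₁^Λ` to the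
automorphism `σ_{[φ,h,u]}` of `B⁰_Λ(S)` is a surjective group homomorphism from the
group `(𝒮_Λ × Aut(S) × H₁^Λ, ·)` onto the automorphism group `Aut(B⁰_Λ(S))` (whose
operation is composition applied left-to-right): every `σ_{[φ,h,u]}` is an
automorphism, `𝔉` is multiplicative, and `𝔉` is surjective onto the set of
automorphisms of `B⁰_Λ(S)`. -/
theorem stmt_9 {Λ S : Type*} [Nonempty Λ] [MonoidWithZero S] :
    (∀ p : (Λ ≃ Λ) × (S ≃* S) × (Λ → Sˣ),
      IsSemigroupAut (brandtAut p.1 p.2.1 p.2.2)) ∧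
    (∀ p q : (Λ ≃ Λ) × (S ≃* S) × (Λ → Sˣ),
      brandtAut (tripleMul p q).1 (tripleMul p q).2.1 (tripleMul p q).2.2 =
        brandtAut q.1 q.2.1 q.2.2 ∘ brandtAut p.1 p.2.1 p.2.2) ∧
    (∀ σ : Brandt Λ S → Brandt Λ S, IsSemigroupAut σ →
      ∃ p : (Λ ≃ Λ) × (S ≃* S) × (Λ → Sˣ), brandtAut p.1 p.2.1 p.2.2 = σ) := by
  exact ⟨fun p => ⟨brandtAut_bijective p, brandtAut_mul p.1 p.2.1 p.2.2⟩,
    brandtAut_tripleMul, fun σ hσ => brandt_surj σ hσ.1 hσ.2⟩
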